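/- Let θ > 0, δ_n → 0 with nδ_n → ∞, and let g : (0,∞) → ℂ be continuous with |g(x)| ≤ C min(x, 1/x). Let W_ℓ ~ Poisson(θ/ℓ) independent. Then for each t ∈ ℝ, E[exp(it ∑_{ℓ=1}^n W_ℓ g(1/(ℓδ_n)))] → exp(θ ∫_0^∞ (e^{itg(1/x)} − 1) dx/x) as n → ∞. -/

import Mathlib

open Real MeasureTheory Filter Set ProbabilityTheory

lemma norm_cexp_sub_one_le (u : ℂ) : ‖Complex.exp u - 1‖ ≤ ‖u‖ * Real.exp ‖u‖ := by
  have hf : HasSum (fun n : ℕ => u ^ n / n.factorial) (Complex.exp u) := by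
    rw [Complex.exp_eq_exp_ℂ]; exact NormedSpace.expSeries_div_hasSum_exp u
  have hf1 : HasSum (fun n : ℕ => u ^ (n + 1) / (n + 1).factorial) (Complex.exp u - 1) := by
    rw [hasSum_nat_add_iff (f := fun n : ℕ => u ^ n / n.factorial) 1]
    simpa using hf
  have hgR : HasSum (fun n : ℕ => ‖u‖ * (‖u‖ ^ n / n.factorial)) (‖u‖ * Real.exp ‖u‖) := by
    have h : HasSum (fun n : ℕ => ‖u‖ ^ n / n.factorial) (Real.exp ‖u‖) := by
      rw [Real.exp_eq_exp_ℝ]; exact NormedSpace.expSeries_div_hasSum_exp ‖u‖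
    exact h.mul_left _
  have hb : ∀ n : ℕ, ‖u ^ (n + 1) / ((n + 1).factorial : ℂ)‖ ≤ ‖u‖ * (‖u‖ ^ n / n.factorial) := by
    intro n
    rw [norm_div, norm_pow]
    have h1 : ((n.factorial : ℝ)) ≤ ((n + 1).factorial : ℝ) := by
      exact_mod_cast Nat.factorial_le (Nat.le_succ n)
    have h2 : (0 : ℝ) < n.factorial := by exact_mod_cast n.factorial_pos
    have h3 : ‖((n + 1).factorial : ℂ)‖ = ((n + 1).factorial : ℝ) := by
      simp
    rw [h3]
    calc ‖u‖ ^ (n + 1) / ((n + 1).factorial : ℝ) ≤ ‖u‖ ^ (n + 1) / (n.factorial : ℝ) := by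
          gcongr
      _ = ‖u‖ * (‖u‖ ^ n / n.factorial) := by rw [pow_succ]; ring
  have hsn : Summable fun n : ℕ => ‖u ^ (n + 1) / ((n + 1).factorial : ℂ)‖ :=
    Summable.of_nonneg_of_le (fun n => norm_nonneg _) hb hgR.summable
  calc ‖Complex.exp u - 1‖ = ‖∑' n : ℕ, u ^ (n + 1) / (n + 1).factorial‖ := by rw [hf1.tsum_eq]
    _ ≤ ∑' n : ℕ, ‖u ^ (n + 1) / ((n + 1).factorial : ℂ)‖ := norm_tsum_le_tsum_norm hsn
    _ ≤ ∑' n : ℕ, ‖u‖ * (‖u‖ ^ n / n.factorial) := Summable.tsum_le_tsum hb hsn hgR.summable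
    _ = ‖u‖ * Real.exp ‖u‖ := hgR.tsum_eq

lemma poisson_exp_integral {Ω : Type*} [MeasurableSpace Ω] (μ : Measure Ω)
    [IsProbabilityMeasure μ] (lam : ℝ) (hlam : 0 ≤ lam) (X : Ω → ℕ) (hX : Measurable X)
    (hlaw : ∀ k : ℕ, μ {ω | X ω = k} =
      ENNReal.ofReal (Real.exp (-lam) * lam ^ k / (Nat.factorial k))) (c : ℂ) :
    Integrable (fun ω => Complex.exp (c * X ω)) μ ∧
      ∫ ω, Complex.exp (c * X ω) ∂μ = Complex.exp (lam * (Complex.exp c - 1)) := by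
  set p : ℕ → ℝ := fun k => Real.exp (-lam) * lam ^ k / (Nat.factorial k) with hp
  have hpnonneg : ∀ k, 0 ≤ p k := fun k => by positivity
  set f : ℕ → ℂ := fun k => Complex.exp (c * k) with hf
  have hfmeas : Measurable f := measurable_from_nat
  set ν : Measure ℕ := μ.map X with hν
  have hνk : ∀ k : ℕ, ν {k} = ENNReal.ofReal (p k) := by
    intro k
    rw [hν, Measure.map_apply hX (measurableSet_singleton k)]
    exact hlaw k
  set r : ℝ := ‖Complex.exp c‖ with hr
  have hrpos : 0 < r := by rw [hr]; exact norm_pos_iff.mpr (Complex.exp_ne_zero c)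
  have hnormf : ∀ k : ℕ, ‖f k‖ = r ^ k := by
    intro k
    rw [hf]
    simp only []
    rw [mul_comm, Complex.exp_nat_mul, norm_pow]
  have hsum : Summable (fun k : ℕ => p k * r ^ k) := by
    have : (fun k : ℕ => p k * r ^ k) = fun k : ℕ => Real.exp (-lam) * ((lam * r) ^ k / k.factorial) := by
      funext k; rw [hp]; simp only [mul_pow]; ring
    rw [this]
    exact (Real.summable_pow_div_factorial (lam * r)).mul_left _
  -- integrability on ν
  have hfint : Integrable f ν := by
    refine ⟨hfmeas.aestronglyMeasurable, ?_⟩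
    rw [HasFiniteIntegral]
    rw [lintegral_countable']
    have heq : ∀ k : ℕ, (‖f k‖₊ : ENNReal) * ν {k} = ENNReal.ofReal (p k * r ^ k) := by
      intro k
      rw [hνk k, ← enorm_eq_nnnorm, ← ofReal_norm, hnormf k, ← ENNReal.ofReal_mul (by positivity)]
      rw [mul_comm]
    calc ∑' k : ℕ, (‖f k‖₊ : ENNReal) * ν {k} = ∑' k : ℕ, ENNReal.ofReal (p k * r ^ k) := by
          exact tsum_congr heq
      _ = ENNReal.ofReal (∑' k : ℕ, p k * r ^ k) :=
          (ENNReal.ofReal_tsum_of_nonneg (fun k => by positivity) hsum).symm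
      _ < ⊤ := ENNReal.ofReal_lt_top
  have hcomp : Integrable (fun ω => f (X ω)) μ := by
    rw [← Function.comp_def]
    exact (integrable_map_measure hfmeas.aestronglyMeasurable hX.aemeasurable).mp hfint
  refine ⟨hcomp, ?_⟩
  have h1 : ∫ ω, Complex.exp (c * X ω) ∂μ = ∫ k, f k ∂ν := by
    rw [hν, integral_map hX.aemeasurable hfmeas.aestronglyMeasurable]
  rw [h1, integral_countable' hfint]
  have h2 : ∀ k : ℕ, (ν {k}).toReal • f k
      = Complex.exp (-(lam : ℂ)) * (((lam : ℂ) * Complex.exp c) ^ k / k.factorial) := by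
    intro k
    rw [hνk k, ENNReal.toReal_ofReal (hpnonneg k), hp, hf]
    simp only []
    rw [mul_comm c (k : ℂ), Complex.exp_nat_mul]
    rw [Complex.real_smul]
    push_cast [Complex.ofReal_exp]
    rw [mul_pow]
    ring
  simp only [measureReal_def]
  rw [tsum_congr h2, tsum_mul_left]
  have h3 : HasSum (fun k : ℕ => ((lam : ℂ) * Complex.exp c) ^ k / k.factorial)
      (Complex.exp ((lam : ℂ) * Complex.exp c)) := by
    rw [Complex.exp_eq_exp_ℂ]
    exact NormedSpace.expSeries_div_hasSum_exp _
  rw [h3.tsum_eq, ← Complex.exp_add]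
  congr 1
  ring

lemma IndepFun.integral_mul_complex {Ω : Type*} [MeasurableSpace Ω] {μ : Measure Ω}
    [IsProbabilityMeasure μ] {X Y : Ω → ℂ} (hXY : IndepFun X Y μ)
    (hX : Integrable X μ) (hY : Integrable Y μ) :
    ∫ ω, X ω * Y ω ∂μ = (∫ ω, X ω ∂μ) * ∫ ω, Y ω ∂μ := by
  have hXr : Integrable (fun ω => (X ω).re) μ := hX.re
  have hXi : Integrable (fun ω => (X ω).im) μ := hX.im
  have hYr : Integrable (fun ω => (Y ω).re) μ := hY.re
  have hYi : Integrable (fun ω => (Y ω).im) μ := hY.im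
  have irr : IndepFun (fun ω => (X ω).re) (fun ω => (Y ω).re) μ :=
    hXY.comp Complex.measurable_re Complex.measurable_re
  have iri : IndepFun (fun ω => (X ω).re) (fun ω => (Y ω).im) μ :=
    hXY.comp Complex.measurable_re Complex.measurable_im
  have iir : IndepFun (fun ω => (X ω).im) (fun ω => (Y ω).re) μ :=
    hXY.comp Complex.measurable_im Complex.measurable_re
  have iii : IndepFun (fun ω => (X ω).im) (fun ω => (Y ω).im) μ :=
    hXY.comp Complex.measurable_im Complex.measurable_im
  have err : ∫ ω, (X ω).re * (Y ω).re ∂μ = (∫ ω, (X ω).re ∂μ) * ∫ ω, (Y ω).re ∂μ :=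
    irr.integral_mul_eq_mul_integral hXr.aestronglyMeasurable hYr.aestronglyMeasurable
  have eri : ∫ ω, (X ω).re * (Y ω).im ∂μ = (∫ ω, (X ω).re ∂μ) * ∫ ω, (Y ω).im ∂μ :=
    iri.integral_mul_eq_mul_integral hXr.aestronglyMeasurable hYi.aestronglyMeasurable
  have eir : ∫ ω, (X ω).im * (Y ω).re ∂μ = (∫ ω, (X ω).im ∂μ) * ∫ ω, (Y ω).re ∂μ :=
    iir.integral_mul_eq_mul_integral hXi.aestronglyMeasurable hYr.aestronglyMeasurable
  have eii : ∫ ω, (X ω).im * (Y ω).im ∂μ = (∫ ω, (X ω).im ∂μ) * ∫ ω, (Y ω).im ∂μ :=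
    iii.integral_mul_eq_mul_integral hXi.aestronglyMeasurable hYi.aestronglyMeasurable
  have mrr : Integrable (fun ω => (X ω).re * (Y ω).re) μ := irr.integrable_mul hXr hYr
  have mri : Integrable (fun ω => (X ω).re * (Y ω).im) μ := iri.integrable_mul hXr hYi
  have mir : Integrable (fun ω => (X ω).im * (Y ω).re) μ := iir.integrable_mul hXi hYr
  have mii : Integrable (fun ω => (X ω).im * (Y ω).im) μ := iii.integrable_mul hXi hYi
  have hdecomp : ∀ Z : Ω → ℂ, Integrable Z μ →
      ∫ ω, Z ω ∂μ = ((∫ ω, (Z ω).re ∂μ : ℝ) : ℂ) + ((∫ ω, (Z ω).im ∂μ : ℝ) : ℂ) * Complex.I := by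
    intro Z hZ
    have h := integral_re_add_im (𝕜 := ℂ) hZ
    simp only [RCLike.re_to_complex, RCLike.im_to_complex, RCLike.I_to_complex] at h
    exact h.symm
  have hXY' : Integrable (fun ω => X ω * Y ω) μ := hXY.integrable_mul hX hY
  rw [hdecomp X hX, hdecomp Y hY, hdecomp _ hXY']
  have hre : (fun ω => (X ω * Y ω).re)
      = fun ω => (X ω).re * (Y ω).re - (X ω).im * (Y ω).im := by
    funext ω; exact Complex.mul_re _ _
  have him : (fun ω => (X ω * Y ω).im)
      = fun ω => (X ω).re * (Y ω).im + (X ω).im * (Y ω).re := by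
    funext ω; exact Complex.mul_im _ _
  simp only [hre, him]
  rw [integral_sub mrr mii, integral_add mri mir, err, eri, eir, eii]
  have hI : Complex.I ^ 2 = -1 := Complex.I_sq
  push_cast
  linear_combination (-((∫ ω, (X ω).im ∂μ : ℝ) : ℂ) * ((∫ ω, (Y ω).im ∂μ : ℝ) : ℂ)) * hI

lemma iIndep_integral_prod_complex {Ω : Type*} [MeasurableSpace Ω] {μ : Measure Ω}
    [IsProbabilityMeasure μ] (f : ℕ → Ω → ℂ)
    (hind : iIndepFun f μ) (hm : ∀ i, Measurable (f i)) :
    ∀ s : Finset ℕ, (∀ i ∈ s, Integrable (f i) μ) →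
      Integrable (fun ω => ∏ i ∈ s, f i ω) μ ∧
      ∫ ω, ∏ i ∈ s, f i ω ∂μ = ∏ i ∈ s, ∫ ω, f i ω ∂μ := by
  intro s
  induction s using Finset.cons_induction with
  | empty => intro _; simp
  | cons i s hi ih =>
    intro hint
    obtain ⟨h1int, h1eq⟩ := ih fun j hj => hint j (Finset.mem_cons_of_mem hj)
    have hii : Integrable (f i) μ := hint i (Finset.mem_cons_self i s)
    have hIF : IndepFun (f i) (fun ω => ∏ j ∈ s, f j ω) μ := by
      have h := (hind.indepFun_finset_prod_of_notMem hm hi).symm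
      have : (∏ j ∈ s, f j) = fun ω => ∏ j ∈ s, f j ω := by
        funext ω; exact Finset.prod_apply ω s f
      rwa [this] at h
    have hprod : Integrable (fun ω => f i ω * ∏ j ∈ s, f j ω) μ := hIF.integrable_mul hii h1int
    constructor
    · simpa only [Finset.prod_cons] using hprod
    · simp only [Finset.prod_cons]
      rw [show (∫ ω, f i ω * ∏ j ∈ s, f j ω ∂μ) = (∫ ω, f i ω ∂μ) * ∫ ω, ∏ j ∈ s, f j ω ∂μ from
        IndepFun.integral_mul_complex hIF hii h1int, h1eq]

lemma riemann_sum_tendsto (δ : ℕ → ℝ) (hδpos : ∀ n, 0 < δ n)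
    (hδ0 : Tendsto δ atTop (nhds 0))
    (hδtop : Tendsto (fun n : ℕ => (n : ℝ) * δ n) atTop atTop)
    (F : ℝ → ℂ) (hFcont : ContinuousOn F (Ioi 0)) (K : ℝ)
    (hFb : ∀ y : ℝ, 0 < y → ‖F y‖ ≤ K * min 1 (y ^ 2)⁻¹) :
    Tendsto (fun n : ℕ => ∑ ℓ ∈ Finset.Icc 1 n, F (ℓ * δ n) * (δ n : ℂ)) atTop
      (nhds (∫ x in Ioi (0:ℝ), F x)) := by
  have hK : 0 ≤ K := by
    have h := (norm_nonneg (F 1)).trans (hFb 1 one_pos)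
    simpa using h
  set H : ℕ → ℝ → ℂ := fun n x => ∑ ℓ ∈ Finset.Icc 1 n,
    Set.indicator (Ioc (((ℓ:ℝ) - 1) * δ n) ((ℓ:ℝ) * δ n)) (fun _ => F ((ℓ:ℝ) * δ n)) x with hH
  -- evaluation of H
  have heval : ∀ n : ℕ, ∀ x : ℝ, 0 < x →
      H n x = if ⌈x / δ n⌉₊ ≤ n then F ((⌈x / δ n⌉₊ : ℝ) * δ n) else 0 := by
    intro n x hx
    have hδ := hδpos n
    have hxδ : 0 < x / δ n := div_pos hx hδ
    have hkey : ∀ ℓ : ℕ, ℓ ∈ Finset.Icc 1 n →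
        (x ∈ Ioc (((ℓ:ℝ) - 1) * δ n) ((ℓ:ℝ) * δ n) ↔ ℓ = ⌈x / δ n⌉₊) := by
      intro ℓ hℓ
      have hℓ1 : 1 ≤ ℓ := (Finset.mem_Icc.mp hℓ).1
      have hℓ0 : ℓ ≠ 0 := Nat.one_le_iff_ne_zero.mp hℓ1
      have hcast : ((ℓ - 1 : ℕ) : ℝ) = (ℓ : ℝ) - 1 := by
        rw [Nat.cast_sub hℓ1]; simp
      rw [Set.mem_Ioc, ← div_le_iff₀ hδ, ← lt_div_iff₀ hδ, eq_comm, Nat.ceil_eq_iff hℓ0, hcast]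
    calc H n x = ∑ ℓ ∈ Finset.Icc 1 n, if ℓ = ⌈x / δ n⌉₊ then F ((ℓ:ℝ) * δ n) else 0 := by
          refine Finset.sum_congr rfl fun ℓ hℓ => ?_
          rw [Set.indicator_apply]
          exact if_congr (hkey ℓ hℓ) rfl rfl
      _ = if ⌈x / δ n⌉₊ ∈ Finset.Icc 1 n then F ((⌈x / δ n⌉₊ : ℝ) * δ n) else 0 :=
          Finset.sum_ite_eq' (Finset.Icc 1 n) _ _
      _ = _ := by
          have h1 : 1 ≤ ⌈x / δ n⌉₊ := Nat.one_le_ceil_iff.mpr hxδ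
          simp [Finset.mem_Icc, h1]
  -- integral of H
  have hH_int_eq : ∀ n : ℕ, ∫ x in Ioi (0:ℝ), H n x
      = ∑ ℓ ∈ Finset.Icc 1 n, F ((ℓ:ℝ) * δ n) * (δ n : ℂ) := by
    intro n
    have hδ := hδpos n
    have hint : ∀ ℓ ∈ Finset.Icc 1 n, Integrable
        (Set.indicator (Ioc (((ℓ:ℝ) - 1) * δ n) ((ℓ:ℝ) * δ n)) (fun _ => F ((ℓ:ℝ) * δ n)))
        (volume.restrict (Ioi (0:ℝ))) := by
      intro ℓ _
      apply Integrable.restrict (μ := volume)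
      rw [integrable_indicator_iff measurableSet_Ioc]
      exact integrableOn_const measure_Ioc_lt_top.ne
    rw [hH, integral_finset_sum _ hint]
    refine Finset.sum_congr rfl fun ℓ hℓ => ?_
    have hℓ1 : 1 ≤ ℓ := (Finset.mem_Icc.mp hℓ).1
    have hsub : Ioc (((ℓ:ℝ) - 1) * δ n) ((ℓ:ℝ) * δ n) ⊆ Ioi (0:ℝ) := by
      intro y hy
      have h1 : (1:ℝ) ≤ (ℓ:ℝ) := by exact_mod_cast hℓ1
      have h0 : (0:ℝ) ≤ ((ℓ:ℝ) - 1) * δ n := mul_nonneg (by linarith) hδ.le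
      exact lt_of_le_of_lt h0 hy.1
    rw [integral_indicator measurableSet_Ioc, Measure.restrict_restrict measurableSet_Ioc,
      Set.inter_eq_self_of_subset_left hsub, setIntegral_const, measureReal_def, Real.volume_Ioc]
    have h2 : (ℓ:ℝ) * δ n - ((ℓ:ℝ) - 1) * δ n = δ n := by ring
    rw [h2, ENNReal.toReal_ofReal hδ.le, Complex.real_smul, mul_comm]
  -- measurability
  have hHmeas : ∀ n : ℕ, AEStronglyMeasurable (H n) (volume.restrict (Ioi (0:ℝ))) := by
    intro n
    refine (Finset.measurable_sum _ fun ℓ _ => ?_).aestronglyMeasurable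
    exact measurable_const.indicator measurableSet_Ioc
  -- integrable bound
  set bound : ℝ → ℝ := fun x => K * min 1 (x ^ 2)⁻¹ with hbd
  have hbmeas : Measurable bound :=
    measurable_const.mul ((measurable_const.min ((measurable_id.pow_const 2).inv)))
  have hbound_int : IntegrableOn bound (Ioi (0:ℝ)) volume := by
    have h1 : IntegrableOn bound (Ioc (0:ℝ) 1) volume := by
      refine Integrable.mono'
        (integrableOn_const measure_Ioc_lt_top.ne : IntegrableOn (fun _ => K) _ _)
        hbmeas.aestronglyMeasurable.restrict (ae_of_all _ fun x => ?_)
      have h0 : (0:ℝ) ≤ min 1 (x ^ 2)⁻¹ := le_min zero_le_one (by positivity)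
      rw [hbd, Real.norm_eq_abs, abs_of_nonneg (mul_nonneg hK h0)]
      simpa using mul_le_mul_of_nonneg_left (min_le_left (1:ℝ) ((x ^ 2)⁻¹)) hK
    have h2 : IntegrableOn bound (Ioi (1:ℝ)) volume := by
      have hrp : IntegrableOn (fun x : ℝ => K * x ^ (-2 : ℝ)) (Ioi (1:ℝ)) volume :=
        (integrableOn_Ioi_rpow_of_lt (by norm_num) one_pos).const_mul K
      refine Integrable.mono' hrp hbmeas.aestronglyMeasurable.restrict ?_
      rw [ae_restrict_iff' measurableSet_Ioi]
      refine ae_of_all _ fun x hx => ?_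
      have hx1 : (1:ℝ) < x := hx
      have hx0 : (0:ℝ) < x := lt_trans one_pos hx1
      have hpow : x ^ (-2:ℝ) = (x ^ 2)⁻¹ := by
        rw [show (-2:ℝ) = -((2:ℕ):ℝ) by norm_num, Real.rpow_neg hx0.le, Real.rpow_natCast]
      have h0 : (0:ℝ) ≤ min 1 (x ^ 2)⁻¹ := le_min zero_le_one (by positivity)
      rw [hbd, Real.norm_eq_abs, abs_of_nonneg (mul_nonneg hK h0), hpow]
      exact mul_le_mul_of_nonneg_left (min_le_right _ _) hK
    rw [← Set.Ioc_union_Ioi_eq_Ioi (zero_le_one (α := ℝ))]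
    exact h1.union h2
  -- uniform bound on H n
  have h_bound : ∀ n : ℕ, ∀ᵐ x ∂(volume.restrict (Ioi (0:ℝ))), ‖H n x‖ ≤ bound x := by
    intro n
    rw [ae_restrict_iff' measurableSet_Ioi]
    refine ae_of_all _ fun x hx => ?_
    have hx0 : 0 < x := hx
    rw [heval n x hx0]
    have h0 : (0:ℝ) ≤ min 1 (x ^ 2)⁻¹ := le_min zero_le_one (by positivity)
    split_ifs with hcase
    · have hy : x ≤ (⌈x / δ n⌉₊ : ℝ) * δ n := by
        rw [← div_le_iff₀ (hδpos n)]
        exact Nat.le_ceil _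
      have hy0 : 0 < (⌈x / δ n⌉₊ : ℝ) * δ n := lt_of_lt_of_le hx0 hy
      refine (hFb _ hy0).trans ?_
      refine mul_le_mul_of_nonneg_left (min_le_min le_rfl ?_) hK
      apply inv_anti₀ (by positivity)
      nlinarith
    · simpa using mul_nonneg hK h0
  -- pointwise convergence
  have h_lim : ∀ᵐ x ∂(volume.restrict (Ioi (0:ℝ))),
      Tendsto (fun n => H n x) atTop (nhds (F x)) := by
    rw [ae_restrict_iff' measurableSet_Ioi]
    refine ae_of_all _ fun x hx => ?_
    have hx0 : 0 < x := hx
    have hlb : ∀ n, x ≤ (⌈x / δ n⌉₊ : ℝ) * δ n := by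
      intro n
      rw [← div_le_iff₀ (hδpos n)]
      exact Nat.le_ceil _
    have hub : ∀ n, (⌈x / δ n⌉₊ : ℝ) * δ n ≤ x + δ n := by
      intro n
      have h := (Nat.ceil_lt_add_one (le_of_lt (div_pos hx0 (hδpos n)))).le
      calc (⌈x / δ n⌉₊ : ℝ) * δ n ≤ (x / δ n + 1) * δ n := by
            exact mul_le_mul_of_nonneg_right h (hδpos n).le
        _ = x + δ n := by rw [add_mul, div_mul_cancel₀ _ (hδpos n).ne', one_mul]
    have hyt : Tendsto (fun n => (⌈x / δ n⌉₊ : ℝ) * δ n) atTop (nhds x) := by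
      have hupper : Tendsto (fun n => x + δ n) atTop (nhds x) := by
        have h := tendsto_const_nhds (x := x) (f := atTop (α := ℕ)) |>.add hδ0
        rw [add_zero] at h
        exact h
      exact tendsto_of_tendsto_of_tendsto_of_le_of_le tendsto_const_nhds hupper hlb hub
    have hev : ∀ᶠ n in atTop, H n x = F ((⌈x / δ n⌉₊ : ℝ) * δ n) := by
      filter_upwards [hδ0.eventually (gt_mem_nhds one_pos),
        hδtop.eventually_ge_atTop (x + 1)] with n h1 h2
      rw [heval n x hx0, if_pos ?_]
      have hlt : (⌈x / δ n⌉₊ : ℝ) * δ n < (n:ℝ) * δ n := by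
        calc (⌈x / δ n⌉₊ : ℝ) * δ n ≤ x + δ n := hub n
          _ < x + 1 := by linarith
          _ ≤ (n:ℝ) * δ n := h2
      have := lt_of_mul_lt_mul_right hlt (hδpos n).le
      exact_mod_cast this.le
    have hcont : Tendsto F (nhdsWithin x (Ioi 0)) (nhds (F x)) := hFcont x hx0
    have hmem : ∀ n, (⌈x / δ n⌉₊ : ℝ) * δ n ∈ Ioi (0:ℝ) :=
      fun n => lt_of_lt_of_le hx0 (hlb n)
    have htend : Tendsto (fun n => F ((⌈x / δ n⌉₊ : ℝ) * δ n)) atTop (nhds (F x)) :=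
      hcont.comp (tendsto_nhdsWithin_iff.mpr ⟨hyt, Eventually.of_forall hmem⟩)
    exact htend.congr' (hev.mono fun n hn => hn.symm)
  have hdct := tendsto_integral_of_dominated_convergence bound hHmeas
    hbound_int h_bound h_lim
  have : (fun n => ∫ x in Ioi (0:ℝ), H n x)
      = fun n : ℕ => ∑ ℓ ∈ Finset.Icc 1 n, F ((ℓ:ℝ) * δ n) * (δ n : ℂ) := funext hH_int_eq
  rwa [this] at hdct

theorem char_fun_convergence (θ : ℝ) (hθ : 0 < θ)
    {Ω : Type*} [MeasurableSpace Ω] (μ : Measure Ω) [IsProbabilityMeasure μ]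
    (W : ℕ → Ω → ℕ) (hmeas : ∀ ℓ, Measurable (W ℓ))
    (hindep : iIndepFun W μ)
    (hpois : ∀ ℓ : ℕ, 1 ≤ ℓ → ∀ k : ℕ,
      μ {ω | W ℓ ω = k} =
        ENNReal.ofReal (Real.exp (-(θ / ℓ)) * (θ / ℓ) ^ k / (Nat.factorial k)))
    (δ : ℕ → ℝ) (hδpos : ∀ n, 0 < δ n)
    (hδ0 : Tendsto δ atTop (nhds 0))
    (hδtop : Tendsto (fun n : ℕ => (n : ℝ) * δ n) atTop atTop)
    (g : ℝ → ℂ) (hgcont : ContinuousOn g (Set.Ioi 0))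
    (C : ℝ) (hC : 0 < C)
    (hg : ∀ x : ℝ, 0 < x → ‖g x‖ ≤ C * min x (1 / x)) :
    ∀ t : ℝ,
      Tendsto
        (fun n : ℕ => ∫ ω,
          Complex.exp (Complex.I * t *
            ∑ ℓ ∈ Finset.Icc 1 n, (W ℓ ω : ℂ) * g (1 / (ℓ * δ n))) ∂μ)
        atTop
        (nhds (Complex.exp ((θ : ℂ) *
          ∫ x in Set.Ioi (0 : ℝ), (Complex.exp (Complex.I * t * g (1 / x)) - 1) / (x : ℂ)))) := by
  intro t
  set F : ℝ → ℂ := fun x => (Complex.exp (Complex.I * t * g (1 / x)) - 1) / (x : ℂ) with hF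
  -- continuity of F on Ioi 0
  have hinvcont : ContinuousOn (fun x : ℝ => 1 / x) (Ioi 0) :=
    continuousOn_const.div continuousOn_id fun x hx => ne_of_gt hx
  have hinvmaps : MapsTo (fun x : ℝ => 1 / x) (Ioi 0) (Ioi 0) := fun x hx => by
    simp only [mem_Ioi] at *
    positivity
  have hFcont : ContinuousOn F (Ioi 0) := by
    apply ContinuousOn.div
    · refine ContinuousOn.sub ?_ continuousOn_const
      refine Complex.continuous_exp.comp_continuousOn ?_
      exact continuousOn_const.mul (hgcont.comp hinvcont hinvmaps)
    · exact Complex.continuous_ofReal.continuousOn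
    · intro x hx
      exact Complex.ofReal_ne_zero.mpr (ne_of_gt hx)
  -- bound for F
  set K : ℝ := |t| * C * Real.exp (|t| * C) with hKd
  have hFb : ∀ y : ℝ, 0 < y → ‖F y‖ ≤ K * min 1 (y ^ 2)⁻¹ := by
    intro y hy
    have hy' : 0 < 1 / y := by positivity
    have hgy : ‖g (1 / y)‖ ≤ C * min (1 / y) y := by
      have h := hg (1 / y) hy'
      rwa [one_div_one_div] at h
    have hmin1 : min (1 / y) y ≤ 1 := by
      rcases le_total y 1 with h | h
      · exact (min_le_right _ _).trans h
      · refine (min_le_left _ _).trans ?_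
        rw [div_le_one hy]
        exact h
    have hmin0 : (0:ℝ) ≤ min (1 / y) y := le_min hy'.le hy.le
    set u : ℂ := Complex.I * t * g (1 / y) with hu
    have hnu : ‖u‖ = |t| * ‖g (1 / y)‖ := by
      rw [hu, norm_mul, norm_mul, Complex.norm_I, one_mul, Complex.norm_real, Real.norm_eq_abs]
    have hnu1 : ‖u‖ ≤ |t| * C * min (1 / y) y := by
      rw [hnu, mul_assoc]
      exact mul_le_mul_of_nonneg_left hgy (abs_nonneg t)
    have hnu2 : ‖u‖ ≤ |t| * C := by
      refine hnu1.trans ?_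
      have h := mul_le_mul_of_nonneg_left hmin1 (mul_nonneg (abs_nonneg t) hC.le)
      simpa using h
    have hexpm : Real.exp ‖u‖ ≤ Real.exp (|t| * C) := Real.exp_le_exp.mpr hnu2
    have hnorm : ‖F y‖ = ‖Complex.exp u - 1‖ / y := by
      rw [hF]
      simp only [hu]
      rw [norm_div, Complex.norm_real, Real.norm_eq_abs, abs_of_pos hy]
    calc ‖F y‖ = ‖Complex.exp u - 1‖ / y := hnorm
      _ ≤ (‖u‖ * Real.exp ‖u‖) / y := by
          gcongr
          exact norm_cexp_sub_one_le u
      _ ≤ ((|t| * C * min (1 / y) y) * Real.exp (|t| * C)) / y := by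
          have hmm := mul_le_mul hnu1 hexpm (Real.exp_pos _).le
            (mul_nonneg (mul_nonneg (abs_nonneg t) hC.le) hmin0)
          exact (div_le_div_iff_of_pos_right hy).mpr hmm
      _ = K * (min (1 / y) y / y) := by rw [hKd]; ring
      _ = K * min 1 (y ^ 2)⁻¹ := by
          congr 1
          have h1 : (1 / y) / y = (y ^ 2)⁻¹ := by
            field_simp
          have h2 : y / y = 1 := div_self hy.ne'
          rw [← min_div_div_right hy.le, h1, h2, min_comm]
  -- identification of the characteristic function
  have key : ∀ n : ℕ, (∫ ω, Complex.exp (Complex.I * t *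
        ∑ ℓ ∈ Finset.Icc 1 n, (W ℓ ω : ℂ) * g (1 / (ℓ * δ n))) ∂μ)
      = Complex.exp ((θ:ℂ) * ∑ ℓ ∈ Finset.Icc 1 n, F ((ℓ:ℝ) * δ n) * (δ n : ℂ)) := by
    intro n
    set z : ℕ → ℂ := fun ℓ => Complex.I * t * g (1 / (ℓ * δ n)) with hz
    set f : ℕ → Ω → ℂ := fun ℓ ω => Complex.exp (z ℓ * W ℓ ω) with hfd
    have hrw : ∀ ω, Complex.exp (Complex.I * t *
        ∑ ℓ ∈ Finset.Icc 1 n, (W ℓ ω : ℂ) * g (1 / (ℓ * δ n)))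
        = ∏ ℓ ∈ Finset.Icc 1 n, f ℓ ω := by
      intro ω
      rw [← Complex.exp_sum]
      congr 1
      rw [Finset.mul_sum]
      refine Finset.sum_congr rfl fun ℓ _ => ?_
      simp only [hz]
      ring
    have hfind : iIndepFun f μ := by
      have h := hindep.comp (fun ℓ (k : ℕ) => Complex.exp (z ℓ * k))
        (fun ℓ => measurable_from_nat)
      exact h
    have hfmeas : ∀ ℓ, Measurable (f ℓ) := by
      intro ℓ
      exact (measurable_from_nat (f := fun k : ℕ => Complex.exp (z ℓ * k))).comp (hmeas ℓ)
    have hpois' : ∀ ℓ, 1 ≤ ℓ →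
        (Integrable (fun ω => Complex.exp (z ℓ * W ℓ ω)) μ ∧
          ∫ ω, Complex.exp (z ℓ * W ℓ ω) ∂μ
            = Complex.exp ((θ / ℓ : ℝ) * (Complex.exp (z ℓ) - 1))) := by
      intro ℓ hℓ
      exact poisson_exp_integral μ (θ / ℓ) (div_nonneg hθ.le (Nat.cast_nonneg ℓ))
        (W ℓ) (hmeas ℓ) (hpois ℓ hℓ) (z ℓ)
    have hfint : ∀ ℓ ∈ Finset.Icc 1 n, Integrable (f ℓ) μ := by
      intro ℓ hℓ
      exact (hpois' ℓ (Finset.mem_Icc.mp hℓ).1).1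
    obtain ⟨hpint, hpeq⟩ := iIndep_integral_prod_complex f hfind hfmeas (Finset.Icc 1 n) hfint
    calc (∫ ω, Complex.exp (Complex.I * t *
            ∑ ℓ ∈ Finset.Icc 1 n, (W ℓ ω : ℂ) * g (1 / (ℓ * δ n))) ∂μ)
        = ∫ ω, ∏ ℓ ∈ Finset.Icc 1 n, f ℓ ω ∂μ := by
          congr 1
          funext ω
          exact hrw ω
      _ = ∏ ℓ ∈ Finset.Icc 1 n, ∫ ω, f ℓ ω ∂μ := hpeq
      _ = ∏ ℓ ∈ Finset.Icc 1 n, Complex.exp ((θ / ℓ : ℝ) * (Complex.exp (z ℓ) - 1)) := by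
          refine Finset.prod_congr rfl fun ℓ hℓ => ?_
          exact (hpois' ℓ (Finset.mem_Icc.mp hℓ).1).2
      _ = Complex.exp (∑ ℓ ∈ Finset.Icc 1 n, ((θ / ℓ : ℝ) : ℂ) * (Complex.exp (z ℓ) - 1)) := by
          rw [Complex.exp_sum]
      _ = Complex.exp ((θ:ℂ) * ∑ ℓ ∈ Finset.Icc 1 n, F ((ℓ:ℝ) * δ n) * (δ n : ℂ)) := by
          congr 1
          rw [Finset.mul_sum]
          refine Finset.sum_congr rfl fun ℓ hℓ => ?_
          have hℓ1 : 1 ≤ ℓ := (Finset.mem_Icc.mp hℓ).1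
          have hℓpos : (0:ℝ) < (ℓ:ℝ) := by exact_mod_cast hℓ1
          have hδn := hδpos n
          have hℓne : ((ℓ:ℕ) : ℂ) ≠ 0 := by
            exact_mod_cast (Nat.cast_pos.mpr hℓ1 : (0:ℝ) < ℓ).ne'
          have hδne : ((δ n : ℝ) : ℂ) ≠ 0 := by
            exact_mod_cast hδn.ne'
          simp only [hF, hz]
          push_cast
          field_simp
  -- conclusion
  have hriemann := riemann_sum_tendsto δ hδpos hδ0 hδtop F hFcont K hFb
  have hmul : Tendsto (fun n : ℕ => (θ:ℂ) * ∑ ℓ ∈ Finset.Icc 1 n, F ((ℓ:ℝ) * δ n) * (δ n : ℂ))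
      atTop (nhds ((θ:ℂ) * ∫ x in Ioi (0:ℝ), F x)) := hriemann.const_mul _
  have hfinal := (Complex.continuous_exp.tendsto _).comp hmul
  exact Tendsto.congr (fun n => (key n).symm) hfinal
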